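/- arXiv:1506.07009 — 6 statements merged into one kernel-verified Lean document; each statement's English description precedes it below -/
import Mathlib

section
/- The set D of all real-valued sequences uniformly distributed in [-1/2, 1/2] is shy in ℝ^ℕ; that is, there exist a Borel set B ⊆ ℝ^ℕ containing D and a Borel measure μ on ℝ^ℕ (with its product topology) such that some compact set U ⊆ ℝ^ℕ satisfies 0 < μ(U) < ∞, and μ(B + v) = 0 for every v ∈ ℝ^ℕ. -/
open MeasureTheory Filter Set
open scoped Classical

/-- A sequence of reals `x` is uniformly distributed in `[a, b]`: for all `c, d` with
`a ≤ c < d ≤ b`, the proportion of the first `n` terms (indices `1 ≤ k ≤ n`) lying in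
`[c, d]` tends to `(d - c) / (b - a)`. -/
def IsUniformlyDistributedIn (x : ℕ → ℝ) (a b : ℝ) : Prop :=
  ∀ c d : ℝ, a ≤ c → c < d → d ≤ b →
    Tendsto (fun n : ℕ =>
        (((Finset.Icc 1 n).filter (fun k => x k ∈ Set.Icc c d)).card : ℝ) / n)
      atTop (nhds ((d - c) / (b - a)))

/-- A subset `S` of `ℝ^ℕ` is shy: there exist a Borel set `B ⊇ S` and a Borel measure `μ`
on `ℝ^ℕ` such that some compact set `U` satisfies `0 < μ U < ∞` and `μ (B + v) = 0` for
every `v ∈ ℝ^ℕ`. -/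
def IsShy (S : Set (ℕ → ℝ)) : Prop :=
  ∃ B : Set (ℕ → ℝ), S ⊆ B ∧ MeasurableSet B ∧
    ∃ μ : Measure (ℕ → ℝ),
      (∃ U : Set (ℕ → ℝ), IsCompact U ∧ 0 < μ U ∧ μ U < ⊤) ∧
      ∀ v : ℕ → ℝ, μ ((fun x => x + v) '' B) = 0

/-- Rational-parameter version of uniform distribution in `[-1/2, 1/2]`. -/
def BSet : Set (ℕ → ℝ) :=
  {x | ∀ c d : ℚ, (-(1/2) : ℝ) ≤ (c:ℝ) → (c:ℝ) < (d:ℝ) → (d:ℝ) ≤ 1/2 →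
    Tendsto (fun n : ℕ =>
        (((Finset.Icc 1 n).filter (fun k => x k ∈ Set.Icc (c:ℝ) (d:ℝ))).card : ℝ) / n)
      atTop (nhds (((d:ℝ) - (c:ℝ)) / ((1/2) - (-(1/2)))))}

lemma measurable_count (c d : ℝ) (n : ℕ) : Measurable fun x : ℕ → ℝ =>
    (((Finset.Icc 1 n).filter (fun k => x k ∈ Set.Icc c d)).card : ℝ) / n := by
  apply Measurable.div_const
  have : (fun x : ℕ → ℝ => (((Finset.Icc 1 n).filter (fun k => x k ∈ Set.Icc c d)).card : ℝ))
      = fun x => ∑ k ∈ Finset.Icc 1 n, if x k ∈ Set.Icc c d then (1:ℝ) else 0 := by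
    funext x
    rw [Finset.card_filter]
    push_cast
    rfl
  rw [this]
  apply Finset.measurable_sum
  intro k _
  exact Measurable.ite ((measurable_pi_apply k) measurableSet_Icc) measurable_const
    measurable_const

lemma measurable_BSet : MeasurableSet BSet := by
  have hB : BSet = ⋂ (c : ℚ), ⋂ (d : ℚ),
      {x : ℕ → ℝ | (-(1/2) : ℝ) ≤ (c:ℝ) → (c:ℝ) < (d:ℝ) → (d:ℝ) ≤ 1/2 →
        Tendsto (fun n : ℕ =>
            (((Finset.Icc 1 n).filter (fun k => x k ∈ Set.Icc (c:ℝ) (d:ℝ))).card : ℝ) / n)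
          atTop (nhds (((d:ℝ) - (c:ℝ)) / ((1/2) - (-(1/2)))))} := by
    ext x
    simp only [BSet, Set.mem_setOf_eq, Set.mem_iInter]
  rw [hB]
  refine MeasurableSet.iInter fun c => MeasurableSet.iInter fun d => ?_
  by_cases h : ((-(1/2) : ℝ) ≤ (c:ℝ) ∧ (c:ℝ) < (d:ℝ) ∧ (d:ℝ) ≤ 1/2)
  · have : {x : ℕ → ℝ | (-(1/2) : ℝ) ≤ (c:ℝ) → (c:ℝ) < (d:ℝ) → (d:ℝ) ≤ 1/2 →
        Tendsto (fun n : ℕ =>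
            (((Finset.Icc 1 n).filter (fun k => x k ∈ Set.Icc (c:ℝ) (d:ℝ))).card : ℝ) / n)
          atTop (nhds (((d:ℝ) - (c:ℝ)) / ((1/2) - (-(1/2)))))}
        = {x : ℕ → ℝ | Tendsto (fun n : ℕ =>
            (((Finset.Icc 1 n).filter (fun k => x k ∈ Set.Icc (c:ℝ) (d:ℝ))).card : ℝ) / n)
          atTop (nhds (((d:ℝ) - (c:ℝ)) / ((1/2) - (-(1/2)))))} := by
      ext x
      simp only [Set.mem_setOf_eq]
      exact ⟨fun hx => hx h.1 h.2.1 h.2.2, fun hx _ _ _ => hx⟩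
    rw [this]
    exact measurableSet_tendsto _ (fun n => measurable_count _ _ n)
  · have : {x : ℕ → ℝ | (-(1/2) : ℝ) ≤ (c:ℝ) → (c:ℝ) < (d:ℝ) → (d:ℝ) ≤ 1/2 →
        Tendsto (fun n : ℕ =>
            (((Finset.Icc 1 n).filter (fun k => x k ∈ Set.Icc (c:ℝ) (d:ℝ))).card : ℝ) / n)
          atTop (nhds (((d:ℝ) - (c:ℝ)) / ((1/2) - (-(1/2)))))} = Set.univ := by
      ext x
      simp only [Set.mem_setOf_eq, Set.mem_univ, iff_true]
      intro h1 h2 h3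
      exact absurd ⟨h1, h2, h3⟩ h
    rw [this]
    exact MeasurableSet.univ

lemma no_double_shift {y : ℕ → ℝ} {s : ℝ} (hs : 0 < s)
    (hy : y ∈ BSet) (hys : (fun k => y k + s) ∈ BSet) : False := by
  obtain ⟨q, hq0, hq1⟩ := exists_rat_btwn (show (0:ℝ) < min s 1 by positivity)
  have hqs : (q:ℝ) < s := lt_of_lt_of_le hq1 (min_le_left _ _)
  have hq1' : (q:ℝ) < 1 := lt_of_lt_of_le hq1 (min_le_right _ _)
  have h1 := hy (-(1/2)) (1/2) (by push_cast; norm_num) (by push_cast; norm_num)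
    (by push_cast; norm_num)
  have h2 := hys (-(1/2)) (-(1/2) + q) (by push_cast; norm_num)
    (by push_cast; linarith) (by push_cast; linarith)
  have e1 : (((1/2 : ℚ):ℝ) - ((-(1/2):ℚ):ℝ)) / ((1/2) - (-(1/2))) = 1 := by push_cast; norm_num
  have e2 : ((((-(1/2) + q):ℚ):ℝ) - ((-(1/2):ℚ):ℝ)) / ((1/2) - (-(1/2))) = (q:ℝ) := by
    push_cast; ring
  rw [e1] at h1
  rw [e2] at h2
  have hsum := h1.add h2
  have hle : (1 : ℝ) + q ≤ 1 := by
    refine le_of_tendsto hsum ?_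
    filter_upwards [eventually_ge_atTop 1] with n hn
    set A := ((Finset.Icc 1 n).filter
      (fun k => y k ∈ Set.Icc (((-(1/2):ℚ)):ℝ) (((1/2):ℚ):ℝ))).card
    set C := ((Finset.Icc 1 n).filter
      (fun k => y k + s ∈ Set.Icc (((-(1/2):ℚ)):ℝ) ((((-(1/2)+q):ℚ)):ℝ))).card
    have hdisj : ∀ k, (y k + s ∈ Set.Icc (((-(1/2):ℚ)):ℝ) ((((-(1/2)+q):ℚ)):ℝ)) →
        ¬ (y k ∈ Set.Icc (((-(1/2):ℚ)):ℝ) (((1/2):ℚ):ℝ)) := by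
      intro k hk hk'
      simp only [Set.mem_Icc] at hk hk'
      push_cast at hk hk'
      linarith [hk.2, hk'.1]
    have hC : C ≤ ((Finset.Icc 1 n).filter
        (fun k => ¬ (y k ∈ Set.Icc (((-(1/2):ℚ)):ℝ) (((1/2):ℚ):ℝ)))).card := by
      apply Finset.card_le_card
      intro k hk
      simp only [Finset.mem_filter] at hk ⊢
      exact ⟨hk.1, hdisj k hk.2⟩
    have hAC : A + C ≤ n := by
      calc A + C ≤ A + ((Finset.Icc 1 n).filter
            (fun k => ¬ (y k ∈ Set.Icc (((-(1/2):ℚ)):ℝ) (((1/2):ℚ):ℝ)))).card :=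
          Nat.add_le_add_left hC _
        _ = (Finset.Icc 1 n).card := Finset.card_filter_add_card_filter_not _
        _ = n := by simp [Nat.card_Icc]
    have hn0 : (0:ℝ) < n := by exact_mod_cast Nat.lt_of_lt_of_le Nat.zero_lt_one hn
    rw [← add_div, div_le_one hn0]
    exact_mod_cast hAC
  linarith

/-- The set `D` of all real valued sequences uniformly distributed in `[-1/2, 1/2]` is shy
in `ℝ^ℕ`. -/
theorem shy_of_uniformlyDistributed :
    IsShy {x : ℕ → ℝ | IsUniformlyDistributedIn x (-(1/2)) (1/2)} := by
  refine ⟨BSet, ?_, measurable_BSet, ?_⟩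
  · intro x hx c d h1 h2 h3
    exact hx (c:ℝ) (d:ℝ) h1 h2 h3
  · -- the probe measure: Lebesgue on the diagonal `t ↦ (t, t, t, ...)`
    set f : ℝ → (ℕ → ℝ) := fun t _ => t with hf_def
    have hf : Measurable f := measurable_pi_lambda _ fun _ => measurable_id
    set ν : Measure ℝ := volume.restrict (Set.Icc 0 1) with hν_def
    refine ⟨ν.map f, ⟨f '' Set.Icc 0 1, ?_, ?_, ?_⟩, ?_⟩
    · exact isCompact_Icc.image (continuous_pi fun _ => continuous_id)
    · -- positive measure
      have hU : MeasurableSet (f '' Set.Icc 0 1) := by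
        have : f '' Set.Icc 0 1
            = (⋂ k, {x : ℕ → ℝ | x k = x 0}) ∩ ((fun x : ℕ → ℝ => x 0) ⁻¹' Set.Icc 0 1) := by
          ext x
          simp only [Set.mem_image, Set.mem_inter_iff, Set.mem_iInter, Set.mem_setOf_eq,
            Set.mem_preimage]
          constructor
          · rintro ⟨t, ht, rfl⟩
            exact ⟨fun k => rfl, ht⟩
          · rintro ⟨hk, h0⟩
            exact ⟨x 0, h0, funext fun k => (hk k).symm⟩
        rw [this]
        refine MeasurableSet.inter (MeasurableSet.iInter fun k => ?_)
          ((measurable_pi_apply 0) measurableSet_Icc)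
        exact measurableSet_eq_fun (measurable_pi_apply k) (measurable_pi_apply 0)
      rw [Measure.map_apply hf hU]
      have hsub : Set.Icc (0:ℝ) 1 ⊆ f ⁻¹' (f '' Set.Icc 0 1) := Set.subset_preimage_image f _
      have : ν (Set.Icc 0 1) = 1 := by
        rw [hν_def, Measure.restrict_apply measurableSet_Icc, Set.inter_self, Real.volume_Icc]
        norm_num
      calc (0:ENNReal) < 1 := by norm_num
        _ = ν (Set.Icc 0 1) := this.symm
        _ ≤ ν (f ⁻¹' (f '' Set.Icc 0 1)) := measure_mono hsub
    · -- finite measure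
      calc ν.map f (f '' Set.Icc 0 1) ≤ ν.map f Set.univ := measure_mono (Set.subset_univ _)
        _ = ν Set.univ := by rw [Measure.map_apply hf MeasurableSet.univ]; rfl
        _ = volume (Set.Icc (0:ℝ) 1) := by
            rw [hν_def, Measure.restrict_apply MeasurableSet.univ, Set.univ_inter]
        _ < ⊤ := by rw [Real.volume_Icc]; norm_num
    · -- translates are null
      intro v
      have himg : (fun x => x + v) '' BSet = (fun x : ℕ → ℝ => x - v) ⁻¹' BSet := by
        ext z
        simp only [Set.mem_image, Set.mem_preimage]
        constructor
        · rintro ⟨x, hx, rfl⟩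
          simpa using hx
        · intro hz
          exact ⟨z - v, hz, by simp⟩
      have hmeas : MeasurableSet ((fun x : ℕ → ℝ => x - v) ⁻¹' BSet) := by
        refine MeasurableSet.preimage measurable_BSet ?_
        exact measurable_pi_lambda _ fun k =>
          (measurable_pi_apply k).sub measurable_const
      rw [himg, Measure.map_apply hf hmeas]
      have hsub : f ⁻¹' ((fun x : ℕ → ℝ => x - v) ⁻¹' BSet)
          = {t : ℝ | (fun k => t - v k) ∈ BSet} := by
        ext t
        simp only [Set.mem_preimage, Set.mem_setOf_eq]
        rfl
      have hss : {t : ℝ | (fun k => t - v k) ∈ BSet}.Subsingleton := by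
        intro t₁ h₁ t₂ h₂
        by_contra hne
        rcases lt_or_gt_of_ne hne with h | h
        · refine no_double_shift (sub_pos.mpr h) h₁ ?_
          have : (fun k => (t₁ - v k) + (t₂ - t₁)) = fun k => t₂ - v k := by
            funext k; ring
          rw [this]; exact h₂
        · refine no_double_shift (sub_pos.mpr h) h₂ ?_
          have : (fun k => (t₂ - v k) + (t₁ - t₂)) = fun k => t₁ - v k := by
            funext k; ring
          rw [this]; exact h₁
      have h0 : volume {t : ℝ | (fun k => t - v k) ∈ BSet} = 0 :=
        Set.Subsingleton.measure_zero hss volume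
      rw [hsub]
      exact le_antisymm (le_trans (Measure.restrict_le_self _) h0.le) (zero_le)
end

section
/- The set ⋃_{J ∈ 𝕁} {x ∈ ℝ^ℕ : x_k ∈ [-1/2, 1/2] for every k ∉ J}, where 𝕁 is the class of all subsets of ℕ of density zero, is shy in ℝ^ℕ; that is, there exist a Borel set B ⊆ ℝ^ℕ containing this union and a Borel measure μ on ℝ^ℕ such that some compact set U satisfies 0 < μ(U) < ∞ and μ(B + v) = 0 for every v ∈ ℝ^ℕ. -/
open MeasureTheory Filter Set
open scoped Classical

/-- A subset `J ⊆ ℕ` has density zero: `#(J ∩ [0, n]) / n → 0`. -/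
def HasDensityZero (J : Set ℕ) : Prop :=
  Tendsto (fun n : ℕ =>
      (((Finset.Icc 0 n).filter (fun k => k ∈ J)).card : ℝ) / n)
    atTop (nhds 0)

lemma hasDensityZero_mono {J J' : Set ℕ} (h : J' ⊆ J) (hJ : HasDensityZero J) :
    HasDensityZero J' := by
  refine squeeze_zero (fun n => by positivity) (fun n => ?_) hJ
  refine div_le_div_of_nonneg_right ?_ (Nat.cast_nonneg n)
  exact_mod_cast Finset.card_le_card (Finset.monotone_filter_right _ (fun k _ hk => h hk))

-- key analytic lemma: if the "good" set is cofinitely avoided, no density zero of bad set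
lemma not_densityZero_of_cofinite_bad {J : Set ℕ} (M : ℕ) (h : ∀ k, M ≤ k → k ∈ J) :
    ¬ HasDensityZero J := by
  intro hJ
  have hlow : ∀ᶠ n : ℕ in atTop, 1 - (M : ℝ) / n ≤
      (((Finset.Icc 0 n).filter (fun k => k ∈ J)).card : ℝ) / n := by
    filter_upwards [eventually_ge_atTop (max M 1)] with n hn
    have hM : M ≤ n := le_trans (le_max_left _ _) hn
    have hn1 : 1 ≤ n := le_trans (le_max_right _ _) hn
    have hsub : Finset.Icc M n ⊆ (Finset.Icc 0 n).filter (fun k => k ∈ J) := by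
      intro k hk
      rw [Finset.mem_Icc] at hk
      exact Finset.mem_filter.2 ⟨Finset.mem_Icc.2 ⟨Nat.zero_le _, hk.2⟩, h k hk.1⟩
    have hcard : (n + 1 - M : ℕ) ≤ ((Finset.Icc 0 n).filter (fun k => k ∈ J)).card := by
      simpa [Nat.card_Icc] using Finset.card_le_card hsub
    have hcardR : (n : ℝ) - M ≤ (((Finset.Icc 0 n).filter (fun k => k ∈ J)).card : ℝ) := by
      have : ((n + 1 - M : ℕ) : ℝ) = (n : ℝ) + 1 - M := by
        have : M ≤ n + 1 := le_trans hM (Nat.le_succ n)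
        push_cast [Nat.cast_sub this]
        ring
      nlinarith [hcard, this, (Nat.cast_le (α := ℝ)).2 hcard]
    have hnpos : (0:ℝ) < n := by exact_mod_cast hn1
    calc (1 : ℝ) - M / n = ((n:ℝ) - M) / n := by
          rw [sub_div, div_self hnpos.ne']
      _ ≤ _ := div_le_div_of_nonneg_right hcardR hnpos.le
  have h1 : Tendsto (fun n : ℕ => 1 - (M : ℝ) / n) atTop (nhds 1) := by
    simpa using tendsto_const_nhds.sub (tendsto_const_div_atTop_nhds_zero_nat (M : ℝ))
  have := le_of_tendsto_of_tendsto h1 hJ hlow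
  linarith

lemma measurableSet_B :
    MeasurableSet {x : ℕ → ℝ | HasDensityZero {k | x k ∉ Set.Icc (-(1/2) : ℝ) (1/2)}} := by
  have hBeq : {x : ℕ → ℝ | HasDensityZero {k | x k ∉ Set.Icc (-(1/2) : ℝ) (1/2)}} =
      {x : ℕ → ℝ | Tendsto (fun n : ℕ =>
        (∑ k ∈ Finset.Icc 0 n,
          (if x k ∉ Set.Icc (-(1/2) : ℝ) (1/2) then (1:ℝ) else 0)) / n)
        atTop (nhds 0)} := by
    ext x
    simp only [Set.mem_setOf_eq, HasDensityZero]
    refine tendsto_congr (fun n => ?_)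
    rw [Finset.card_filter]
    push_cast
    simp [Set.mem_setOf_eq]
  rw [hBeq]
  refine measurableSet_tendsto (nhds (0:ℝ)) (fun n => ?_)
  apply Measurable.div_const
  refine Finset.measurable_sum _ (fun k _ => ?_)
  refine Measurable.ite ?_ measurable_const measurable_const
  show MeasurableSet {x : ℕ → ℝ | x k ∉ Set.Icc (-(1/2) : ℝ) (1/2)}
  exact (measurable_pi_apply k) measurableSet_Icc.compl

/-- The union over all density-zero sets `J ⊆ ℕ` of the sets
`ℝ^J × [-1/2, 1/2]^(ℕ \ J)` is shy in `ℝ^ℕ`. -/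
theorem shy_union_densityZero :
    IsShy (⋃ J ∈ {J : Set ℕ | HasDensityZero J},
      {x : ℕ → ℝ | ∀ k ∉ J, x k ∈ Set.Icc (-(1/2) : ℝ) (1/2)}) := by
  classical
  set B : Set (ℕ → ℝ) :=
    {x : ℕ → ℝ | HasDensityZero {k | x k ∉ Set.Icc (-(1/2) : ℝ) (1/2)}} with hB
  have hφcont : Continuous (fun t : ℝ => (fun k : ℕ => t * 2 ^ k)) :=
    continuous_pi fun k => continuous_id.mul continuous_const
  have hφ : Measurable (fun t : ℝ => (fun k : ℕ => t * 2 ^ k)) := hφcont.measurable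
  have hBmeas : MeasurableSet B := measurableSet_B
  have hUc : IsCompact ((fun t : ℝ => (fun k : ℕ => t * 2 ^ k)) '' Set.Icc 0 1) :=
    isCompact_Icc.image hφcont
  refine ⟨B, ?_, hBmeas, ?_⟩
  · rintro x hx
    simp only [Set.mem_iUnion] at hx
    obtain ⟨J, hJ, hxJ⟩ := hx
    refine hasDensityZero_mono (fun k hk => ?_) hJ
    by_contra hkJ
    exact hk (hxJ k hkJ)
  · refine ⟨Measure.map (fun t : ℝ => (fun k : ℕ => t * 2 ^ k)) (volume.restrict (Set.Icc 0 1)),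
      ⟨(fun t : ℝ => (fun k : ℕ => t * 2 ^ k)) '' Set.Icc 0 1, hUc, ?_, ?_⟩, ?_⟩
    · rw [Measure.map_apply hφ hUc.isClosed.measurableSet,
        Measure.restrict_apply (hφ hUc.isClosed.measurableSet)]
      have h1 : Set.Icc (0:ℝ) 1 ⊆ (fun t : ℝ => (fun k : ℕ => t * 2 ^ k)) ⁻¹'
          ((fun t : ℝ => (fun k : ℕ => t * 2 ^ k)) '' Set.Icc 0 1) ∩ Set.Icc 0 1 :=
        fun t ht => ⟨Set.subset_preimage_image _ _ ht, ht⟩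
      calc (0:ENNReal) < volume (Set.Icc (0:ℝ) 1) := by
            rw [Real.volume_Icc]; norm_num
        _ ≤ _ := measure_mono h1
    · rw [Measure.map_apply hφ hUc.isClosed.measurableSet,
        Measure.restrict_apply (hφ hUc.isClosed.measurableSet)]
      refine lt_of_le_of_lt (measure_mono Set.inter_subset_right) ?_
      rw [Real.volume_Icc]; norm_num
    · intro v
      -- image = preimage of translation
      have himg : (fun x : ℕ → ℝ => x + v) '' B = (fun x : ℕ → ℝ => x - v) ⁻¹' B := by
        ext y
        constructor
        · rintro ⟨x, hx, rfl⟩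
          simpa [add_sub_cancel_right] using hx
        · intro hy
          exact ⟨y - v, hy, sub_add_cancel y v⟩
      have hEmeas : MeasurableSet ((fun x : ℕ → ℝ => x - v) ⁻¹' B) :=
        hBmeas.preimage (measurable_id.sub measurable_const)
      rw [himg, Measure.map_apply hφ hEmeas, Measure.restrict_apply (hφ hEmeas)]
      -- the good intervals
      set G : ℕ → Set ℝ := fun k => (fun t : ℝ => t * 2 ^ k) ⁻¹' Set.Icc (v k - 1/2) (v k + 1/2)
        with hG
      have hGIcc : ∀ k, G k = Set.Icc ((v k - 1/2) / 2 ^ k) ((v k + 1/2) / 2 ^ k) := by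
        intro k
        ext t
        have h2 : (0:ℝ) < 2 ^ k := by positivity
        simp only [hG, Set.mem_preimage, Set.mem_Icc, le_div_iff₀ h2, div_le_iff₀ h2]
      have hGvol : ∀ k, volume (G k) = ENNReal.ofReal ((1:ℝ)/2) ^ k := by
        intro k
        rw [hGIcc k, Real.volume_Icc]
        have h2 : (0:ℝ) < 2 ^ k := by positivity
        have : (v k + 1/2) / 2 ^ k - (v k - 1/2) / 2 ^ k = (1/2)^k := by
          field_simp
          rw [mul_assoc, ← mul_pow, show (2:ℝ) * (1/2) = 1 by norm_num, one_pow]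
          ring
        rw [this, ← ENNReal.ofReal_pow (by norm_num)]
      have hsum : (∑' k, volume (G k)) ≠ ⊤ := by
        simp only [hGvol]
        rw [ENNReal.tsum_geometric]
        refine ENNReal.inv_ne_top.2 ?_
        intro h0
        rw [tsub_eq_zero_iff_le] at h0
        have : ENNReal.ofReal ((1:ℝ)/2) < 1 := by
          rw [ENNReal.ofReal_lt_one]; norm_num
        exact absurd h0 (not_le.2 this)
      have hBC : volume (limsup G atTop) = 0 := measure_limsup_atTop_eq_zero hsum
      refine measure_mono_null (fun t ht => ?_) hBC
      -- t with (φ t) - v ∈ B must be in limsup G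
      rcases ht with ⟨htB, -⟩
      rw [Set.mem_preimage] at htB
      rw [mem_limsup_iff_frequently_mem]
      by_contra hfreq
      rw [not_frequently] at hfreq
      rw [eventually_atTop] at hfreq
      obtain ⟨M, hM⟩ := hfreq
      refine not_densityZero_of_cofinite_bad M (fun k hk => ?_) htB
      -- k ∈ bad set: (φ t - v) k ∉ Icc
      have := hM k hk
      simp only [hG, Set.mem_preimage, Set.mem_Icc, not_and_or, not_le] at this
      simp only [Set.mem_setOf_eq, Pi.sub_apply, Set.mem_Icc, not_and_or, not_le]
      rcases this with h | h
      · left; linarith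
      · right; linarith
end

section
/- For every subset J ⊆ ℕ whose complement ℕ \ J is infinite, the set {x ∈ ℝ^ℕ : x_k ∈ [-1/2, 1/2] for every k ∉ J} is shy in ℝ^ℕ; that is, there exist a Borel set B containing it and a Borel measure μ on ℝ^ℕ such that some compact set U satisfies 0 < μ(U) < ∞ and μ(B + v) = 0 for every v ∈ ℝ^ℕ. -/
open MeasureTheory Filter Set

/-- For every `J ⊆ ℕ` with infinite complement, the set
`{x ∈ ℝ^ℕ : x k ∈ [-1/2, 1/2] for every k ∉ J}` is shy in `ℝ^ℕ`. -/
theorem shy_of_compl_infinite (J : Set ℕ) (hJ : Jᶜ.Infinite) :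
    IsShy {x : ℕ → ℝ | ∀ k ∉ J, x k ∈ Set.Icc (-(1/2) : ℝ) (1/2)} := by
  classical
  set B : Set (ℕ → ℝ) := {x : ℕ → ℝ | ∀ k ∉ J, x k ∈ Set.Icc (-(1/2) : ℝ) (1/2)} with hB
  have hBmeas : MeasurableSet B := by
    have hBeq : B = ⋂ k ∈ Jᶜ, (fun x : ℕ → ℝ => x k) ⁻¹' Set.Icc (-(1/2):ℝ) (1/2) := by
      ext x
      simp only [hB, Set.mem_iInter, Set.mem_setOf_eq, Set.mem_preimage, Set.mem_compl_iff]
    rw [hBeq]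
    exact MeasurableSet.biInter (Set.to_countable _) fun k _ =>
      (measurable_pi_apply k) measurableSet_Icc
  -- the embedding of a line with unbounded direction
  set f : ℝ → (ℕ → ℝ) := fun t k => t * ((k : ℝ) + 1) with hf
  have hfc : Continuous f := by
    apply continuous_pi
    intro k
    exact continuous_id.mul continuous_const
  have hfm : Measurable f := hfc.measurable
  set μ : Measure (ℕ → ℝ) := (volume.restrict (Set.Icc (0:ℝ) 1)).map f with hμ
  refine ⟨B, le_refl _, hBmeas, μ, ⟨f '' Set.Icc 0 1, isCompact_Icc.image hfc, ?_, ?_⟩, ?_⟩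
  · -- 0 < μ U
    have hU : MeasurableSet (f '' Set.Icc (0:ℝ) 1) :=
      (isCompact_Icc.image hfc).isClosed.measurableSet
    rw [hμ, Measure.map_apply hfm hU, Measure.restrict_apply (hfm hU)]
    have hsub : Set.Icc (0:ℝ) 1 ⊆ f ⁻¹' (f '' Set.Icc 0 1) := Set.subset_preimage_image f _
    have : volume (Set.Icc (0:ℝ) 1) ≤ volume (f ⁻¹' (f '' Set.Icc 0 1) ∩ Set.Icc 0 1) :=
      measure_mono (fun t ht => ⟨hsub ht, ht⟩)
    have h1 : (0:ENNReal) < volume (Set.Icc (0:ℝ) 1) := by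
      rw [Real.volume_Icc]; norm_num
    exact lt_of_lt_of_le h1 this
  · -- μ U < ⊤
    have hU : MeasurableSet (f '' Set.Icc (0:ℝ) 1) :=
      (isCompact_Icc.image hfc).isClosed.measurableSet
    rw [hμ, Measure.map_apply hfm hU, Measure.restrict_apply (hfm hU)]
    calc volume (f ⁻¹' (f '' Set.Icc 0 1) ∩ Set.Icc 0 1) ≤ volume (Set.Icc (0:ℝ) 1) :=
          measure_mono (Set.inter_subset_right)
      _ < ⊤ := by rw [Real.volume_Icc]; exact ENNReal.ofReal_lt_top
  · intro v
    have hT : (fun x : ℕ → ℝ => x + v) '' B = (fun x : ℕ → ℝ => x - v) ⁻¹' B := by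
      ext y
      constructor
      · rintro ⟨x, hx, rfl⟩
        simpa using hx
      · intro hy
        exact ⟨y - v, hy, sub_add_cancel y v⟩
    have hsubm : Measurable (fun x : ℕ → ℝ => x - v) := by
      apply measurable_pi_lambda
      intro k
      exact (measurable_pi_apply k).sub measurable_const
    have hTmeas : MeasurableSet ((fun x : ℕ → ℝ => x + v) '' B) := by
      rw [hT]; exact hsubm hBmeas
    rw [hμ, Measure.map_apply hfm hTmeas, Measure.restrict_apply (hfm hTmeas)]
    refine le_antisymm ?_ (zero_le)
    have hzero : volume (f ⁻¹' ((fun x : ℕ → ℝ => x + v) '' B)) = 0 := by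
      set S := f ⁻¹' ((fun x : ℕ → ℝ => x + v) '' B) with hS
      have hSsub : ∀ k ∉ J, S ⊆ Set.Icc ((v k - 1/2) / ((k:ℝ)+1)) ((v k + 1/2) / ((k:ℝ)+1)) := by
        intro k hk t ht
        have hkpos : (0:ℝ) < (k:ℝ) + 1 := by positivity
        rw [hS, Set.mem_preimage, hT, Set.mem_preimage] at ht
        have := ht k hk
        simp only [Set.mem_Icc, Pi.sub_apply, hf] at this
        obtain ⟨h1, h2⟩ := this
        constructor
        · rw [div_le_iff₀ hkpos]; linarith
        · rw [le_div_iff₀ hkpos]; linarith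
      have hbound : ∀ k ∉ J, volume S ≤ ENNReal.ofReal (1 / ((k:ℝ)+1)) := by
        intro k hk
        calc volume S ≤ volume (Set.Icc ((v k - 1/2) / ((k:ℝ)+1)) ((v k + 1/2) / ((k:ℝ)+1))) :=
              measure_mono (hSsub k hk)
          _ = ENNReal.ofReal ((v k + 1/2) / ((k:ℝ)+1) - (v k - 1/2) / ((k:ℝ)+1)) :=
              Real.volume_Icc
          _ = ENNReal.ofReal (1 / ((k:ℝ)+1)) := by
              congr 1
              rw [div_sub_div_same]
              norm_num
      refine le_antisymm ?_ (zero_le)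
      refine ENNReal.le_of_forall_pos_le_add fun ε hε _ => ?_
      rw [zero_add]
      obtain ⟨n, hn⟩ := exists_nat_one_div_lt (show (0:ℝ) < (ε:ℝ) from hε)
      obtain ⟨k, hkJ, hkn⟩ := hJ.exists_gt n
      calc volume S ≤ ENNReal.ofReal (1 / ((k:ℝ)+1)) := hbound k hkJ
        _ ≤ ENNReal.ofReal (1 / ((n:ℝ)+1)) := by
            apply ENNReal.ofReal_le_ofReal
            apply one_div_le_one_div_of_le (by positivity)
            have : (n:ℝ) ≤ (k:ℝ) := by exact_mod_cast hkn.le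
            linarith
        _ ≤ ENNReal.ofReal (ε:ℝ) := ENNReal.ofReal_le_ofReal hn.le
        _ = ε := ENNReal.ofReal_coe_nnreal
    calc volume (f ⁻¹' ((fun x : ℕ → ℝ => x + v) '' B) ∩ Set.Icc 0 1)
        ≤ volume (f ⁻¹' ((fun x : ℕ → ℝ => x + v) '' B)) := measure_mono Set.inter_subset_left
      _ = 0 := hzero
end

section
/- Every compact subset K of ℝ^ℕ (with the product topology) is shy; that is, there exist a Borel set B ⊇ K and a Borel measure μ on ℝ^ℕ such that some compact set U satisfies 0 < μ(U) < ∞ and μ(B + v) = 0 for every v ∈ ℝ^ℕ. -/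
open MeasureTheory Filter Set

/-- Every compact subset of `ℝ^ℕ` (with the product topology) is shy. -/
theorem isCompact_isShy (K : Set (ℕ → ℝ)) (hK : IsCompact K) : IsShy K := by
  -- bound each coordinate of K
  have hbound : ∀ n : ℕ, ∃ m : ℝ, 0 ≤ m ∧ ∀ x ∈ K, |x n| ≤ m := by
    intro n
    obtain ⟨r, hr⟩ := ((hK.image (continuous_apply n)).isBounded).subset_closedBall 0
    refine ⟨max r 0, le_max_right _ _, fun x hx => ?_⟩
    have := hr ⟨x, hx, rfl⟩
    simp [Metric.mem_closedBall, Real.dist_eq] at this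
    exact this.trans (le_max_left _ _)
  choose M hM0 hMK using hbound
  set e : ℕ → ℝ := fun n => (M n + 1) * 2 ^ n with he_def
  have he : ∀ n, 0 < e n := fun n => by
    have := hM0 n; positivity
  set f : ℝ → (ℕ → ℝ) := fun t n => t * e n with hf_def
  have hfc : Continuous f := continuous_pi fun n => continuous_id.mul continuous_const
  have hfm : Measurable f := hfc.measurable
  set B : Set (ℕ → ℝ) := Set.pi Set.univ (fun n => Icc (-(M n)) (M n)) with hB_def
  have hBmeas : MeasurableSet B := MeasurableSet.univ_pi fun n => measurableSet_Icc
  refine ⟨B, ?_, hBmeas, Measure.map f (volume.restrict (Icc 0 1)), ?_, ?_⟩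
  · intro x hx n _
    have h := abs_le.mp (hMK n x hx)
    exact ⟨h.1, h.2⟩
  · refine ⟨f '' Icc 0 1, isCompact_Icc.image hfc, ?_, ?_⟩
    · have hU : MeasurableSet (f '' Icc 0 1) :=
        (isCompact_Icc.image hfc).isClosed.measurableSet
      rw [Measure.map_apply hfm hU, Measure.restrict_apply (hfm hU),
        Set.inter_eq_self_of_subset_right (Set.subset_preimage_image _ _)]
      simp
    · calc Measure.map f (volume.restrict (Icc 0 1)) (f '' Icc 0 1)
          ≤ Measure.map f (volume.restrict (Icc 0 1)) Set.univ := measure_mono (subset_univ _)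
        _ = volume (Icc (0:ℝ) 1) := by
            rw [Measure.map_apply hfm MeasurableSet.univ]
            simp
        _ < ⊤ := by simp
  · intro v
    have himg : (fun x => x + v) '' B = (fun x => x - v) ⁻¹' B := by
      ext x
      constructor
      · rintro ⟨b, hb, rfl⟩; simpa using hb
      · intro h; exact ⟨x - v, h, by simp⟩
    rw [himg]
    have hsubm : Measurable fun x : ℕ → ℝ => x - v := measurable_id.sub measurable_const
    rw [Measure.map_apply hfm (hsubm hBmeas), Measure.restrict_apply (hfm (hsubm hBmeas))]
    -- bound by each coordinate constraint
    have key : ∀ n : ℕ, volume (f ⁻¹' ((fun x => x - v) ⁻¹' B) ∩ Icc 0 1)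
        ≤ ENNReal.ofReal (2 / 2 ^ n) := by
      intro n
      have hsub : f ⁻¹' ((fun x => x - v) ⁻¹' B) ∩ Icc 0 1
          ⊆ Icc ((v n - M n) / e n) ((v n + M n) / e n) := by
        rintro t ⟨ht, -⟩
        have h := ht n (mem_univ n)
        simp only [hf_def, hB_def, Set.mem_Icc, Pi.sub_apply] at h ⊢
        constructor
        · rw [div_le_iff₀ (he n)]; linarith [h.1]
        · rw [le_div_iff₀ (he n)]; linarith [h.2]
      calc volume (f ⁻¹' ((fun x => x - v) ⁻¹' B) ∩ Icc 0 1)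
          ≤ volume (Icc ((v n - M n) / e n) ((v n + M n) / e n)) := measure_mono hsub
        _ = ENNReal.ofReal ((v n + M n) / e n - (v n - M n) / e n) := Real.volume_Icc
        _ ≤ ENNReal.ofReal (2 / 2 ^ n) := by
            apply ENNReal.ofReal_le_ofReal
            rw [div_sub_div_same]
            have h1 : v n + M n - (v n - M n) = 2 * M n := by ring
            have he2 : e n = (M n + 1) * 2 ^ n := rfl
            rw [h1, he2]
            rw [div_le_div_iff₀ (he2 ▸ he n) (by positivity : (0:ℝ) < 2 ^ n)]
            have := hM0 n
            nlinarith [pow_pos (by norm_num : (0:ℝ) < 2) n]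
    have htend : Tendsto (fun n : ℕ => ENNReal.ofReal (2 / 2 ^ n)) atTop (nhds 0) := by
      have h1 : Tendsto (fun n : ℕ => (2:ℝ) / 2 ^ n) atTop (nhds 0) := by
        simpa using tendsto_const_nhds.div_atTop
          (tendsto_pow_atTop_atTop_of_one_lt (by norm_num : (1:ℝ) < 2))
      simpa using (ENNReal.tendsto_ofReal h1)
    exact le_antisymm
      (le_of_tendsto_of_tendsto' tendsto_const_nhds htend key) zero_le
end

section
/- Let λ be Lebesgue measure restricted to [0,1] and let λ_∞ be the product measure ⊗_{k∈ℕ} λ on [0,1]^ℕ. Then the set of sequences (x_k)_{k∈ℕ} ∈ [0,1]^ℕ that are uniformly distributed in [0,1] has λ_∞-measure 1. -/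
open MeasureTheory Filter Set
open scoped Classical

private lemma freq_le (x : ℕ → ℝ) {c d c' d' : ℝ} (h1 : c' ≤ c) (h2 : d ≤ d') (n : ℕ) :
    (((Finset.Icc 1 n).filter (fun k => x k ∈ Set.Icc c d)).card : ℝ) / n ≤
      (((Finset.Icc 1 n).filter (fun k => x k ∈ Set.Icc c' d')).card : ℝ) / n := by
  have hsub : (Finset.Icc 1 n).filter (fun k => x k ∈ Set.Icc c d) ⊆
      (Finset.Icc 1 n).filter (fun k => x k ∈ Set.Icc c' d') := by
    intro k hk
    simp only [Finset.mem_filter] at hk ⊢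
    exact ⟨hk.1, Set.Icc_subset_Icc h1 h2 hk.2⟩
  have hcard := Finset.card_le_card hsub
  rcases Nat.eq_zero_or_pos n with rfl | hn
  · simp
  · have hn' : (0:ℝ) < n := by exact_mod_cast hn
    exact div_le_div_of_nonneg_right (by exact_mod_cast hcard) hn'.le

/-- Deterministic lemma: convergence for rational endpoints implies uniform
distribution. -/
private lemma det_ud (x : ℕ → ℝ)
    (h : ∀ p q : ℚ, 0 ≤ (p:ℝ) → (p:ℝ) < (q:ℝ) → (q:ℝ) ≤ 1 →
      Tendsto (fun n : ℕ =>
        (((Finset.Icc 1 n).filter (fun k => x k ∈ Set.Icc (p:ℝ) (q:ℝ))).card : ℝ) / n)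
        atTop (nhds ((q:ℝ) - (p:ℝ)))) :
    IsUniformlyDistributedIn x 0 1 := by
  intro c d hc hcd hd
  have hgoal : (d - c) / (1 - 0) = d - c := by ring
  rw [hgoal, Metric.tendsto_atTop]
  intro ε hε
  -- rationals q2 ∈ (c, min d (c+ε/4)), q3 ∈ (max q2 (d-ε/4), d)
  obtain ⟨q2, hq2c, hq2u⟩ := exists_rat_btwn (show c < min d (c + ε/4) by
    simp only [lt_min_iff]; constructor <;> linarith)
  obtain ⟨q3, hq3l, hq3d⟩ := exists_rat_btwn (show max (q2:ℝ) (d - ε/4) < d by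
    simp only [max_lt_iff]
    exact ⟨lt_of_lt_of_le hq2u (min_le_left _ _), by linarith⟩)
  have hq2d : (q2:ℝ) < d := lt_of_lt_of_le hq2u (min_le_left _ _)
  have hq2e : (q2:ℝ) < c + ε/4 := lt_of_lt_of_le hq2u (min_le_right _ _)
  have hq23 : (q2:ℝ) < q3 := lt_of_le_of_lt (le_max_left _ _) hq3l
  have hq3e : d - ε/4 < (q3:ℝ) := lt_of_le_of_lt (le_max_right _ _) hq3l
  -- rational q1 with 0 ≤ q1 ≤ c and c - ε/4 < q1
  have hq1ex : ∃ q1 : ℚ, 0 ≤ (q1:ℝ) ∧ (q1:ℝ) ≤ c ∧ c - ε/4 < (q1:ℝ) := by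
    rcases eq_or_lt_of_le hc with h0 | h0
    · exact ⟨0, by simp, by simp [← h0], by push_cast; linarith⟩
    · obtain ⟨q, hql, hqr⟩ := exists_rat_btwn (show max 0 (c - ε/4) < c by
        simp only [max_lt_iff]; exact ⟨h0, by linarith⟩)
      exact ⟨q, (le_max_left _ _).trans hql.le, hqr.le,
        lt_of_le_of_lt (le_max_right _ _) hql⟩
  -- rational q4 with d ≤ q4 ≤ 1 and q4 < d + ε/4
  have hq4ex : ∃ q4 : ℚ, (q4:ℝ) ≤ 1 ∧ d ≤ (q4:ℝ) ∧ (q4:ℝ) < d + ε/4 := by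
    rcases eq_or_lt_of_le hd with h1 | h1
    · exact ⟨1, by simp, by simp [h1], by push_cast; linarith⟩
    · obtain ⟨q, hql, hqr⟩ := exists_rat_btwn (show d < min 1 (d + ε/4) by
        simp only [lt_min_iff]; exact ⟨h1, by linarith⟩)
      exact ⟨q, (hqr.le.trans (min_le_left _ _)), hql.le,
        lt_of_lt_of_le hqr (min_le_right _ _)⟩
  obtain ⟨q1, hq10, hq1c, hq1e⟩ := hq1ex
  obtain ⟨q4, hq41, hq4d, hq4e⟩ := hq4ex
  have h14 := h q1 q4 hq10 (by linarith) hq41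
  have h23 := h q2 q3 (by linarith) hq23 (by linarith)
  rw [Metric.tendsto_atTop] at h14 h23
  obtain ⟨N1, hN1⟩ := h14 (ε/8) (by linarith)
  obtain ⟨N2, hN2⟩ := h23 (ε/8) (by linarith)
  refine ⟨max N1 N2, fun n hn => ?_⟩
  have hn1 := hN1 n (le_trans (le_max_left _ _) hn)
  have hn2 := hN2 n (le_trans (le_max_right _ _) hn)
  rw [Real.dist_eq, abs_sub_lt_iff] at hn1 hn2 ⊢
  have hm1 := freq_le x hq1c hq4d n
  have hm2 := freq_le x hq2c.le hq3d.le n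
  obtain ⟨hn1a, hn1b⟩ := hn1
  obtain ⟨hn2a, hn2b⟩ := hn2
  have hkey1 : (((Finset.Icc 1 n).filter (fun k => x k ∈ Set.Icc (q1:ℝ) (q4:ℝ))).card : ℝ) / n
      - ((q4:ℝ) - (q1:ℝ)) < ε/8 := hn1a
  have hkey2 : (q3:ℝ) - (q2:ℝ) -
      (((Finset.Icc 1 n).filter (fun k => x k ∈ Set.Icc (q2:ℝ) (q3:ℝ))).card : ℝ) / n < ε/8 := hn2b
  constructor
  · linarith [hkey1, hm1]
  · linarith [hkey2, hm2]

open ProbabilityTheory in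
private lemma slln_pair (lamInf : Measure (ℕ → ℝ)) [IsProbabilityMeasure lamInf]
    (hmarg : ∀ (s : Finset ℕ) (f : ℕ → Set ℝ), (∀ i, MeasurableSet (f i)) →
      lamInf {x : ℕ → ℝ | ∀ i ∈ s, x i ∈ f i} =
        ∏ i ∈ s, (volume.restrict (Set.Icc (0:ℝ) 1)) (f i))
    (p q : ℝ) (hp : 0 ≤ p) (hpq : p < q) (hq : q ≤ 1) :
    ∀ᵐ x ∂lamInf, Tendsto (fun n : ℕ =>
        (((Finset.Icc 1 n).filter (fun k => x k ∈ Set.Icc p q)).card : ℝ) / n)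
      atTop (nhds (q - p)) := by
  set μ := volume.restrict (Set.Icc (0:ℝ) 1) with hμ
  have hsingle : ∀ (i : ℕ) (A : Set ℝ), MeasurableSet A →
      lamInf ((fun x : ℕ → ℝ => x i) ⁻¹' A) = μ A := by
    intro i A hA
    have := hmarg {i} (fun _ => A) (fun _ => hA)
    simp at this
    exact this
  have hpair : ∀ i j : ℕ, i ≠ j →
      IndepFun (fun x : ℕ → ℝ => x i) (fun x : ℕ → ℝ => x j) lamInf := by
    intro i j hij
    rw [indepFun_iff_measure_inter_preimage_eq_mul]
    intro A B hA hB
    have hf : ∀ k, MeasurableSet (if k = i then A else B) := by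
      intro k; split <;> assumption
    have h2 := hmarg {i, j} (fun k => if k = i then A else B) hf
    have hset : {x : ℕ → ℝ | ∀ k ∈ ({i, j} : Finset ℕ), x k ∈ (if k = i then A else B)}
        = (fun x : ℕ → ℝ => x i) ⁻¹' A ∩ (fun x : ℕ → ℝ => x j) ⁻¹' B := by
      ext x
      simp only [Finset.mem_insert, Finset.mem_singleton, Set.mem_setOf_eq,
        Set.mem_inter_iff, Set.mem_preimage]
      constructor
      · intro hx
        refine ⟨by simpa using hx i (Or.inl rfl), ?_⟩
        have := hx j (Or.inr rfl)
        simpa [if_neg (Ne.symm hij)] using this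
      · rintro ⟨h1, h2⟩ k hk
        rcases hk with rfl | rfl
        · simpa using h1
        · simpa [if_neg (Ne.symm hij)] using h2
    have hprod : ∏ k ∈ ({i, j} : Finset ℕ), μ (if k = i then A else B)
        = μ A * μ B := by
      rw [Finset.prod_pair hij]
      simp [if_neg (Ne.symm hij)]
    rw [hset, hprod] at h2
    rw [h2, hsingle i A hA, hsingle j B hB]
  have hmapcoord : ∀ i, Measure.map (fun x : ℕ → ℝ => x i) lamInf = μ := by
    intro i
    ext A hA
    rw [Measure.map_apply (measurable_pi_apply i) hA, hsingle i A hA]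
  set g : ℝ → ℝ := (Set.Icc p q).indicator (fun _ => (1:ℝ)) with hg
  have hgm : Measurable g := measurable_const.indicator measurableSet_Icc
  set Y : ℕ → (ℕ → ℝ) → ℝ := fun i x => g (x (i+1)) with hY
  have hYm : ∀ i, Measurable (Y i) := fun i => hgm.comp (measurable_pi_apply (i+1))
  have hindep : Pairwise (Function.onFun (IndepFun · · lamInf) Y) := by
    intro i j hij
    exact (hpair (i+1) (j+1) (by simpa using hij)).comp hgm hgm
  have hident : ∀ i, IdentDistrib (Y i) (Y 0) lamInf lamInf := by
    intro i
    have hc : ∀ k, IdentDistrib (fun x : ℕ → ℝ => x k) (fun x : ℕ → ℝ => x 1)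
        lamInf lamInf := fun k =>
      ⟨(measurable_pi_apply k).aemeasurable, (measurable_pi_apply 1).aemeasurable,
        by rw [hmapcoord, hmapcoord]⟩
    exact (hc (i+1)).comp hgm
  have hint : Integrable (Y 0) lamInf := by
    apply (integrable_const (1:ℝ)).mono' (hYm 0).aestronglyMeasurable
    refine ae_of_all _ fun x => ?_
    simp only [hY, hg, Set.indicator_apply]
    split <;> simp
  have hmean : ∫ x, Y 0 x ∂lamInf = q - p := by
    have hYeq : Y 0 = fun x : ℕ → ℝ =>
        ((fun y : ℕ → ℝ => y 1) ⁻¹' Set.Icc p q).indicator (fun _ => (1:ℝ)) x := by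
      funext x
      simp [hY, hg, Set.indicator_apply]
    rw [hYeq, integral_indicator_const (1:ℝ) ((measurable_pi_apply 1) measurableSet_Icc),
      measureReal_def, hsingle 1 _ measurableSet_Icc, hμ,
      Measure.restrict_apply measurableSet_Icc,
      Set.inter_eq_self_of_subset_left (Set.Icc_subset_Icc hp hq), Real.volume_Icc]
    simp [ENNReal.toReal_ofReal (by linarith : (0:ℝ) ≤ q - p)]
  have hsum : ∀ (x : ℕ → ℝ) (n : ℕ),
      (((Finset.Icc 1 n).filter (fun k => x k ∈ Set.Icc p q)).card : ℝ)
        = ∑ i ∈ Finset.range n, Y i x := by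
    intro x n
    rw [← Finset.sum_boole, show Finset.Icc 1 n = Finset.Ico 1 (n+1) from
      (Finset.Ico_add_one_right_eq_Icc 1 n).symm, Finset.sum_Ico_eq_sum_range]
    simp [hY, hg, Set.indicator_apply, add_comm]
  have hslln := strong_law_ae_real Y hint hindep hident
  rw [hmean] at hslln
  filter_upwards [hslln] with x hx
  convert hx using 2 with n
  rw [hsum x n]

/-- Let `λ_∞` be the countable product of copies of Lebesgue measure restricted to
`[0, 1]` (characterized as the probability measure on `ℝ^ℕ` whose finite-dimensional
marginals are the corresponding finite products). Then `λ_∞`-almost every sequence in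
`[0,1]^ℕ` is uniformly distributed in `[0, 1]`. -/
theorem product_lebesgue_ae_uniformlyDistributed
    (lamInf : Measure (ℕ → ℝ)) [IsProbabilityMeasure lamInf]
    (hmarg : ∀ (s : Finset ℕ) (f : ℕ → Set ℝ), (∀ i, MeasurableSet (f i)) →
      lamInf {x : ℕ → ℝ | ∀ i ∈ s, x i ∈ f i} =
        ∏ i ∈ s, (volume.restrict (Set.Icc (0:ℝ) 1)) (f i)) :
    lamInf {x : ℕ → ℝ | (∀ k, x k ∈ Set.Icc (0:ℝ) 1) ∧
      IsUniformlyDistributedIn x 0 1} = 1 := by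
  have hcoord : ∀ᵐ x ∂lamInf, ∀ k, x k ∈ Set.Icc (0:ℝ) 1 := by
    rw [ae_all_iff]
    intro k
    rw [ae_iff]
    have h2 := hmarg {k} (fun _ => (Set.Icc (0:ℝ) 1)ᶜ) (fun _ => measurableSet_Icc.compl)
    have hset : {x : ℕ → ℝ | ∀ i ∈ ({k} : Finset ℕ), x i ∈ (Set.Icc (0:ℝ) 1)ᶜ}
        = {x : ℕ → ℝ | ¬ x k ∈ Set.Icc (0:ℝ) 1} := by
      ext x; simp
    rw [hset] at h2
    rw [h2]
    simp [Measure.restrict_apply measurableSet_Icc.compl]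
  have hrq : ∀ᵐ x ∂lamInf, ∀ p q : ℚ, 0 ≤ (p:ℝ) → (p:ℝ) < (q:ℝ) → (q:ℝ) ≤ 1 →
      Tendsto (fun n : ℕ =>
        (((Finset.Icc 1 n).filter (fun k => x k ∈ Set.Icc (p:ℝ) (q:ℝ))).card : ℝ) / n)
        atTop (nhds ((q:ℝ) - (p:ℝ))) := by
    rw [ae_all_iff]
    intro p
    rw [ae_all_iff]
    intro q
    by_cases hcond : 0 ≤ (p:ℝ) ∧ (p:ℝ) < (q:ℝ) ∧ (q:ℝ) ≤ 1
    · filter_upwards [slln_pair lamInf hmarg p q hcond.1 hcond.2.1 hcond.2.2] with x hx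
      intro _ _ _
      exact hx
    · exact ae_of_all _ fun x h1 h2 h3 => absurd ⟨h1, h2, h3⟩ hcond
  have hae : ∀ᵐ x ∂lamInf, x ∈ {x : ℕ → ℝ | (∀ k, x k ∈ Set.Icc (0:ℝ) 1) ∧
      IsUniformlyDistributedIn x 0 1} := by
    filter_upwards [hcoord, hrq] with x h1 h2
    exact ⟨h1, det_ud x h2⟩
  set S := {x : ℕ → ℝ | (∀ k, x k ∈ Set.Icc (0:ℝ) 1) ∧ IsUniformlyDistributedIn x 0 1}
  have h0 : lamInf Sᶜ = 0 := by
    rw [ae_iff] at hae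
    exact hae
  refine le_antisymm prob_le_one ?_
  calc (1:ENNReal) = lamInf Set.univ := measure_univ.symm
    _ ≤ lamInf S + lamInf Sᶜ := by
        rw [← Set.union_compl_self S]; exact measure_union_le _ _
    _ = lamInf S := by rw [h0, add_zero]
end

section
/- Let V be a Polish topological vector space over ℝ and let μ be a Borel measure on V that is quasi-finite (there exists a Borel set A with 0 < μ(A) < ∞) and translation-quasi-invariant (for every Borel set A and every h ∈ V, μ(A) = 0 if and only if μ(A + h) = 0). Then every set X ⊆ V that is contained in a Borel μ-null set is shy in V; that is, there exist a Borel set B ⊇ X and a Borel measure ν on V such that some compact set U satisfies 0 < ν(U) < ∞ and ν(B + v) = 0 for every v ∈ V. -/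
open MeasureTheory Filter Set
open scoped ENNReal

/-- Tightness-style lemma: on a Polish space, any finite Borel measure of positive total
mass gives positive mass to some compact set. -/
lemma exists_isCompact_pos_measure {α : Type*} [TopologicalSpace α] [PolishSpace α]
    [MeasurableSpace α] [BorelSpace α] (ν : Measure α) [IsFiniteMeasure ν]
    (hpos : 0 < ν Set.univ) : ∃ K : Set α, IsCompact K ∧ 0 < ν K := by
  letI := TopologicalSpace.upgradeIsCompletelyMetrizable α
  have hne : Nonempty α := by
    by_contra h
    rw [not_nonempty_iff] at h
    simp [Set.univ_eq_empty_iff.2 h] at hpos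
  obtain ⟨u, hu⟩ := TopologicalSpace.exists_dense_seq α
  set c : ℝ≥0∞ := ν Set.univ with hc
  have hcne : c ≠ ⊤ := measure_ne_top ν _
  -- for each n, a finite union of closed balls of radius 1/(n+1) with complement of
  -- measure at most c / 2^(n+2)
  have key : ∀ n : ℕ, ∃ m : ℕ,
      ν (⋃ i ∈ Finset.range (m + 1), Metric.closedBall (u i) (1 / (n + 1)))ᶜ
        ≤ c / 2 ^ (n + 2) := by
    intro n
    set s : ℕ → Set α := fun m => ⋃ i ∈ Finset.range (m + 1),
      Metric.closedBall (u i) (1 / (n + 1)) with hs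
    have hsmeas : ∀ m, MeasurableSet (s m) := fun m =>
      (Finset.range (m + 1)).measurableSet_biUnion
        (fun i _ => Metric.isClosed_closedBall.measurableSet)
    have hmono : Monotone s := by
      intro a b hab
      apply Set.biUnion_subset_biUnion_left
      intro i hi
      exact Finset.mem_range.mpr (lt_of_lt_of_le (Finset.mem_range.mp hi) (by omega))
    have hcover : ⋃ m, s m = Set.univ := by
      apply Set.eq_univ_of_forall
      intro x
      have hx : x ∈ ⋃ i, Metric.closedBall (u i) (1 / (n + 1)) := by
        have : (0 : ℝ) < 1 / (n + 1) := by positivity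
        obtain ⟨i, hi⟩ := (Metric.denseRange_iff.1 hu) x (1 / (n + 1)) this
        exact Set.mem_iUnion.2 ⟨i, Metric.mem_closedBall.2 hi.le⟩
      obtain ⟨i, hi⟩ := Set.mem_iUnion.1 hx
      exact Set.mem_iUnion.2 ⟨i, Set.mem_biUnion (Finset.mem_range.2 (Nat.lt_succ_self i)) hi⟩
    have htend : Tendsto (fun m => ν (s m)) atTop (nhds (ν Set.univ)) := by
      have := tendsto_measure_iUnion_atTop (μ := ν) hmono
      rwa [hcover] at this
    by_cases hδ : c / 2 ^ (n + 2) = 0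
    · exfalso
      rw [ENNReal.div_eq_zero_iff] at hδ
      rcases hδ with h | h
      · exact hpos.ne' h
      · exact (ENNReal.pow_ne_top (by norm_num)) h
    · have hδpos : 0 < c / 2 ^ (n + 2) := pos_iff_ne_zero.2 hδ
      have hlt : c - c / 2 ^ (n + 2) < c := ENNReal.sub_lt_self hcne hpos.ne' hδ
      have hev : ∀ᶠ m in atTop, c - c / 2 ^ (n + 2) < ν (s m) :=
        (tendsto_order.1 htend).1 _ hlt
      obtain ⟨m, hm⟩ := hev.exists
      refine ⟨m, ?_⟩
      have hcompl : ν (s m)ᶜ = c - ν (s m) :=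
        measure_compl (hsmeas m) (measure_ne_top ν _)
      rw [hcompl, tsub_le_iff_right]
      calc c ≤ c - c / 2 ^ (n + 2) + c / 2 ^ (n + 2) := le_tsub_add
        _ ≤ ν (s m) + c / 2 ^ (n + 2) := add_le_add_left hm.le _
        _ = c / 2 ^ (n + 2) + ν (s m) := add_comm _ _
  choose m hm using key
  set K : Set α := ⋂ n, ⋃ i ∈ Finset.range (m n + 1),
    Metric.closedBall (u i) (1 / (n + 1)) with hK
  have hKclosed : IsClosed K :=
    isClosed_iInter fun n => isClosed_biUnion_finset
      (fun i _ => Metric.isClosed_closedBall)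
  have hKtb : TotallyBounded K := by
    rw [Metric.totallyBounded_iff]
    intro ε hε
    obtain ⟨n, hn⟩ := exists_nat_one_div_lt hε
    refine ⟨u '' (Finset.range (m n + 1) : Set ℕ), (Set.Finite.image _
      (Finset.range (m n + 1)).finite_toSet), ?_⟩
    intro x hx
    have hx' : x ∈ ⋃ i ∈ Finset.range (m n + 1), Metric.closedBall (u i) (1 / (n + 1)) :=
      Set.mem_iInter.1 hx n
    obtain ⟨i, hi, hxi⟩ := Set.mem_iUnion₂.1 hx'
    refine Set.mem_iUnion₂.2 ⟨u i, Set.mem_image_of_mem u hi, ?_⟩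
    exact Metric.mem_ball.2 (lt_of_le_of_lt (Metric.mem_closedBall.1 hxi) hn)
  have hKcompact : IsCompact K := hKtb.isCompact_of_isClosed hKclosed
  refine ⟨K, hKcompact, ?_⟩
  -- estimate the measure of the complement
  have hKc : ν Kᶜ ≤ c / 2 := by
    have h1 : Kᶜ = ⋃ n, (⋃ i ∈ Finset.range (m n + 1),
        Metric.closedBall (u i) (1 / (n + 1)))ᶜ := by
      rw [hK, Set.compl_iInter]
    have h2 : ν Kᶜ ≤ ∑' n, c / 2 ^ (n + 2) := by
      rw [h1]
      exact le_trans (measure_iUnion_le _) (ENNReal.tsum_le_tsum fun n => hm n)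
    have h3 : ∑' n : ℕ, c / 2 ^ (n + 2) = c / 2 := by
      have e1 : ∀ n : ℕ, c / 2 ^ (n + 2) = (2⁻¹ : ℝ≥0∞) ^ n * (2⁻¹ ^ 2 * c) := by
        intro n
        rw [ENNReal.div_eq_inv_mul, ENNReal.inv_pow, pow_add, mul_assoc]
      simp_rw [e1]
      rw [ENNReal.tsum_mul_right, ENNReal.tsum_geometric, ENNReal.one_sub_inv_two,
        inv_inv]
      have h2two : (2 : ℝ≥0∞) * 2⁻¹ = 1 := ENNReal.mul_inv_cancel (by norm_num) (by norm_num)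
      rw [pow_two, ← mul_assoc, ← mul_assoc, h2two, one_mul, ENNReal.div_eq_inv_mul]
    rw [h3] at h2
    exact h2
  have hhalf : c / 2 < c := ENNReal.half_lt_self hpos.ne' hcne
  by_contra hzero
  push_neg at hzero
  have hK0 : ν K = 0 := le_antisymm hzero (zero_le ..)
  have : c ≤ c / 2 := by
    calc c = ν (K ∪ Kᶜ) := by rw [Set.union_compl_self]
      _ ≤ ν K + ν Kᶜ := measure_union_le _ _
      _ = ν Kᶜ := by rw [hK0, zero_add]
      _ ≤ c / 2 := hKc
  exact absurd this (not_le.2 hhalf)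

/-- Let `V` be a Polish topological vector space over `ℝ` and `μ` a Borel measure on `V`
that is quasi-finite and translation-quasi-invariant. Then every set `X ⊆ V` contained in
a Borel `μ`-null set is shy in `V`: there exist a Borel set `B ⊇ X` and a Borel measure
`ν` on `V` such that some compact set `U` satisfies `0 < ν U < ∞` and `ν (B + v) = 0` for
every `v ∈ V`. -/
theorem shy_of_null_of_quasiInvariant
    {V : Type*} [AddCommGroup V] [Module ℝ V] [TopologicalSpace V]
    [IsTopologicalAddGroup V] [ContinuousSMul ℝ V] [PolishSpace V]
    [MeasurableSpace V] [BorelSpace V]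
    (μ : Measure V)
    (hquasiFin : ∃ A : Set V, MeasurableSet A ∧ 0 < μ A ∧ μ A < ⊤)
    (hquasiInv : ∀ A : Set V, MeasurableSet A → ∀ h : V,
      (μ A = 0 ↔ μ ((fun x => x + h) '' A) = 0))
    (X : Set V) (N : Set V) (hN : MeasurableSet N) (hXN : X ⊆ N) (hNnull : μ N = 0) :
    ∃ B : Set V, X ⊆ B ∧ MeasurableSet B ∧
      ∃ ν : Measure V,
        (∃ U : Set V, IsCompact U ∧ 0 < ν U ∧ ν U < ⊤) ∧
        ∀ v : V, ν ((fun x => x + v) '' B) = 0 := by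
  obtain ⟨A, hA, hApos, hAfin⟩ := hquasiFin
  set ν : Measure V := μ.restrict A with hν
  haveI : IsFiniteMeasure ν := ⟨by rwa [hν, Measure.restrict_apply_univ]⟩
  have hνuniv : 0 < ν Set.univ := by rwa [hν, Measure.restrict_apply_univ]
  obtain ⟨K, hKcompact, hKpos⟩ := exists_isCompact_pos_measure ν hνuniv
  refine ⟨N, hXN, hN, ν, ⟨K, hKcompact, hKpos, lt_of_le_of_lt (measure_mono (Set.subset_univ K))
    (by rwa [hν, Measure.restrict_apply_univ])⟩, ?_⟩
  intro v
  have hμimg : μ ((fun x => x + v) '' N) = 0 := (hquasiInv N hN v).1 hNnull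
  have : ν ((fun x => x + v) '' N) ≤ μ ((fun x => x + v) '' N) :=
    Measure.restrict_le_self _
  rw [hμimg] at this
  exact le_antisymm this (zero_le ..)
end
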